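/- Let μ be a translation-invariant, downward FKG probability measure on {0,1}^ℤ and let ρ ∈ (0,1). Assume μ(η ≡ 0 on {1,2,…,n}) ≤ (1−ρ)^n for all n ≥ 1. Then for all disjoint finite subsets Λ, Δ of {…,−2,−1,0} with μ(η ≡ 0 on Λ and η ≡ 1 on Δ) > 0, and all n ≥ 1, one has μ(η ≡ 0 on {1,2,…,n} | η ≡ 0 on Λ, η ≡ 1 on Δ) ≤ (1−ρ)^n. In words: the exponential bound on runs of zeros persists under conditioning on any finite cylinder event in the past coordinates {…,−1,0}. (This is the discrete-time version of the claim, used in the proofs of Theorems 1.3 and 1.4, that the conditional probability of a run of zeros given any past information is at most the unconditioned exponential bound.) -/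

import Mathlib

open MeasureTheory ProbabilityTheory

/-- A measurable, increasing (upward-closed) event on `{0,1}^V`. -/
def IncreasingEvent {V : Type*} (B : Set (V → Bool)) : Prop :=
  MeasurableSet B ∧ ∀ ⦃ξ η : V → Bool⦄, ξ ≤ η → ξ ∈ B → η ∈ B

/-- A measure on `{0,1}^V` is positively associated if increasing events are
positively correlated. -/
def PositivelyAssociated {V : Type*} (μ : Measure (V → Bool)) : Prop :=
  ∀ B₁ B₂ : Set (V → Bool), IncreasingEvent B₁ → IncreasingEvent B₂ →
    μ B₁ * μ B₂ ≤ μ (B₁ ∩ B₂)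

/-- The event that the configuration is `0` everywhere on `Λ`. -/
def ZeroOn {V : Type*} (Λ : Set V) : Set (V → Bool) :=
  {η | ∀ x ∈ Λ, η x = false}

/-- Downward FKG: conditioned on being `0` on any finite set (of positive
probability), the measure is positively associated. -/
def DownwardFKG {V : Type*} (μ : Measure (V → Bool)) : Prop :=
  ∀ Λ : Finset V, 0 < μ (ZeroOn (Λ : Set V)) →
    PositivelyAssociated (μ[|ZeroOn (Λ : Set V)])

namespace RunBound

lemma measurableSet_zeroOn (S : Set ℤ) : MeasurableSet (ZeroOn S) := by
  have h : ZeroOn S = ⋂ x ∈ S, (fun η : ℤ → Bool => η x) ⁻¹' {false} := by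
    ext η; simp [ZeroOn]
  rw [h]
  exact MeasurableSet.biInter S.to_countable
    (fun x _ => (measurable_pi_apply x) (measurableSet_singleton false))

lemma zeroOn_mem_mono {S : Set ℤ} {ξ η : ℤ → Bool} (h : ξ ≤ η) (hη : η ∈ ZeroOn S) :
    ξ ∈ ZeroOn S := by
  intro x hx
  have hb := h x
  rw [hη x hx] at hb
  exact le_bot_iff.mp hb

lemma increasing_compl_zeroOn (S : Set ℤ) : IncreasingEvent (ZeroOn S)ᶜ :=
  ⟨(measurableSet_zeroOn S).compl, fun ξ η hle hξ hη => hξ (zeroOn_mem_mono hle hη)⟩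

lemma zeroOn_inter (S T : Finset ℤ) :
    ZeroOn (S : Set ℤ) ∩ ZeroOn (T : Set ℤ) = ZeroOn ((S ∪ T : Finset ℤ) : Set ℤ) := by
  ext η
  simp only [ZeroOn, Set.mem_inter_iff, Set.mem_setOf_eq, Finset.coe_union, Finset.mem_coe,
    Finset.mem_union]
  constructor
  · rintro ⟨h1, h2⟩ x (hx | hx)
    · exact h1 x hx
    · exact h2 x hx
  · intro h
    exact ⟨fun x hx => h x (Or.inl hx), fun x hx => h x (Or.inr hx)⟩

lemma zeroOn_anti {S T : Finset ℤ} (h : S ⊆ T) :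
    ZeroOn (T : Set ℤ) ⊆ ZeroOn (S : Set ℤ) :=
  fun η hη x hx => hη x (h hx)

noncomputable def zval (μ : Measure (ℤ → Bool)) (S : Finset ℤ) : ℝ :=
  (μ (ZeroOn (S : Set ℤ))).toReal

variable {μ : Measure (ℤ → Bool)} [IsProbabilityMeasure μ]

lemma zval_nonneg (S : Finset ℤ) : 0 ≤ zval μ S := ENNReal.toReal_nonneg

lemma zval_le_one (S : Finset ℤ) : zval μ S ≤ 1 := by
  have := prob_le_one (μ := μ) (s := ZeroOn (S : Set ℤ))
  simpa [zval] using ENNReal.toReal_mono ENNReal.one_ne_top this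

lemma zval_empty : zval μ (∅ : Finset ℤ) = 1 := by
  have : ZeroOn ((∅ : Finset ℤ) : Set ℤ) = Set.univ := by
    ext η; simp [ZeroOn]
  rw [zval]
  rw [show ((∅ : Finset ℤ) : Set ℤ) = (∅ : Set ℤ) by simp, show ZeroOn (∅ : Set ℤ) = Set.univ by ext η; simp [ZeroOn]]
  simp

lemma zval_anti {S T : Finset ℤ} (h : S ⊆ T) : zval μ T ≤ zval μ S :=
  ENNReal.toReal_mono (measure_ne_top μ _) (measure_mono (zeroOn_anti h))

lemma zval_pos_iff {S : Finset ℤ} : 0 < zval μ S ↔ μ (ZeroOn (S : Set ℤ)) ≠ 0 := by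
  constructor
  · intro h h0; simp [zval, h0] at h
  · intro h; exact ENNReal.toReal_pos h (measure_ne_top μ _)

lemma cond_zeroOn_toReal (T S : Finset ℤ) :
    ((μ[|ZeroOn (T : Set ℤ)]) (ZeroOn (S : Set ℤ))).toReal = zval μ (T ∪ S) / zval μ T := by
  rw [cond_apply (measurableSet_zeroOn _) μ, zeroOn_inter]
  rw [ENNReal.toReal_mul, ENNReal.toReal_inv]
  rw [inv_mul_eq_div]
  rfl

end RunBound

namespace RunBound
variable {μ : Measure (ℤ → Bool)} [IsProbabilityMeasure μ]

/-- The key quadratic inequality from downward FKG: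
`z(T∪A) z(T∪B) ≤ z(T∪A∪B) z(T)`. -/
lemma quad (hdfkg : DownwardFKG μ) (T A B : Finset ℤ)
    (hT : μ (ZeroOn (T : Set ℤ)) ≠ 0) :
    zval μ (T ∪ A) * zval μ (T ∪ B) ≤ zval μ (T ∪ A ∪ B) * zval μ T := by
  haveI hprob : IsProbabilityMeasure (μ[|ZeroOn (T : Set ℤ)]) :=
    cond_isProbabilityMeasure hT
  set ν := μ[|ZeroOn (T : Set ℤ)] with hν
  have hPA := hdfkg T (pos_iff_ne_zero.mpr hT)
  have h := hPA (ZeroOn (A : Set ℤ))ᶜ (ZeroOn (B : Set ℤ))ᶜ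
    (increasing_compl_zeroOn _) (increasing_compl_zeroOn _)
  rw [← hν] at h
  -- convert to reals
  set a := (ν (ZeroOn (A : Set ℤ))).toReal with ha
  set b := (ν (ZeroOn (B : Set ℤ))).toReal with hb
  set c := (ν (ZeroOn (A : Set ℤ) ∩ ZeroOn (B : Set ℤ))).toReal with hc
  set u := (ν (ZeroOn (A : Set ℤ) ∪ ZeroOn (B : Set ℤ))).toReal with hu
  have hA1 : ν (ZeroOn (A : Set ℤ)) ≤ 1 := prob_le_one
  have hB1 : ν (ZeroOn (B : Set ℤ)) ≤ 1 := prob_le_one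
  have hU1 : ν (ZeroOn (A : Set ℤ) ∪ ZeroOn (B : Set ℤ)) ≤ 1 := prob_le_one
  have e1 : ν (ZeroOn (A : Set ℤ))ᶜ = 1 - ν (ZeroOn (A : Set ℤ)) :=
    prob_compl_eq_one_sub (measurableSet_zeroOn _)
  have e2 : ν (ZeroOn (B : Set ℤ))ᶜ = 1 - ν (ZeroOn (B : Set ℤ)) :=
    prob_compl_eq_one_sub (measurableSet_zeroOn _)
  have e3 : (ZeroOn (A : Set ℤ))ᶜ ∩ (ZeroOn (B : Set ℤ))ᶜ
      = (ZeroOn (A : Set ℤ) ∪ ZeroOn (B : Set ℤ))ᶜ := (Set.compl_union _ _).symm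
  have e4 : ν (ZeroOn (A : Set ℤ) ∪ ZeroOn (B : Set ℤ))
        + ν (ZeroOn (A : Set ℤ) ∩ ZeroOn (B : Set ℤ))
      = ν (ZeroOn (A : Set ℤ)) + ν (ZeroOn (B : Set ℤ)) :=
    measure_union_add_inter _ (measurableSet_zeroOn _)
  rw [e1, e2, e3, prob_compl_eq_one_sub ((measurableSet_zeroOn (A : Set ℤ)).union
    (measurableSet_zeroOn _))] at h
  -- toReal versions
  have h' : (1 - a) * (1 - b) ≤ 1 - u := by
    have ht1 : ((1 : ENNReal) - ν (ZeroOn (A : Set ℤ))).toReal = 1 - a :=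
      ENNReal.toReal_sub_of_le hA1 ENNReal.one_ne_top
    have ht2 : ((1 : ENNReal) - ν (ZeroOn (B : Set ℤ))).toReal = 1 - b :=
      ENNReal.toReal_sub_of_le hB1 ENNReal.one_ne_top
    have ht3 : ((1 : ENNReal) - ν (ZeroOn (A : Set ℤ) ∪ ZeroOn (B : Set ℤ))).toReal = 1 - u :=
      ENNReal.toReal_sub_of_le hU1 ENNReal.one_ne_top
    have := ENNReal.toReal_mono (ne_top_of_le_ne_top ENNReal.one_ne_top tsub_le_self) h
    rwa [ENNReal.toReal_mul, ht1, ht2, ht3] at this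
  have e4' : u + c = a + b := by
    have := congrArg ENNReal.toReal e4
    rwa [ENNReal.toReal_add (measure_ne_top _ _) (measure_ne_top _ _),
      ENNReal.toReal_add (measure_ne_top _ _) (measure_ne_top _ _)] at this
  have hab : a * b ≤ c := by nlinarith
  -- identify with zval ratios
  have hzT : 0 < zval μ T := zval_pos_iff.mpr hT
  have ia : a = zval μ (T ∪ A) / zval μ T := by rw [ha, hν, cond_zeroOn_toReal]
  have ib : b = zval μ (T ∪ B) / zval μ T := by rw [hb, hν, cond_zeroOn_toReal]
  have ic : c = zval μ (T ∪ A ∪ B) / zval μ T := by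
    rw [hc, hν, zeroOn_inter, cond_zeroOn_toReal, Finset.union_assoc]
  rw [ia, ib, ic] at hab
  rw [div_mul_div_comm, div_le_div_iff₀ (by positivity) hzT] at hab
  exact (mul_le_mul_iff_of_pos_right hzT).mp (by nlinarith)

lemma meas_shift_one (htrans : μ.map (fun η x => η (x + 1)) = μ) (S : Finset ℤ) :
    μ (ZeroOn ((S.image (· + (1 : ℤ)) : Finset ℤ) : Set ℤ)) = μ (ZeroOn (S : Set ℤ)) := by
  have hT : Measurable (fun (η : ℤ → Bool) (x : ℤ) => η (x + 1)) :=
    measurable_pi_lambda _ fun x => measurable_pi_apply _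
  have hpre : (fun (η : ℤ → Bool) (x : ℤ) => η (x + 1)) ⁻¹' ZeroOn (S : Set ℤ)
      = ZeroOn ((S.image (· + (1 : ℤ)) : Finset ℤ) : Set ℤ) := by
    ext η
    simp only [Set.mem_preimage, ZeroOn, Set.mem_setOf_eq, Finset.coe_image, Set.mem_image,
      Finset.mem_coe]
    constructor
    · rintro h y ⟨x, hx, rfl⟩
      exact h x hx
    · intro h x hx
      exact h (x + 1) ⟨x, hx, rfl⟩
  conv_rhs => rw [← htrans]
  rw [Measure.map_apply hT (measurableSet_zeroOn _), hpre]

lemma zval_shift (htrans : μ.map (fun η x => η (x + 1)) = μ) (S : Finset ℤ) (j : ℕ) :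
    zval μ (S.image (· + (j : ℤ))) = zval μ S := by
  induction j with
  | zero => simp [zval]
  | succ k ih =>
    have himg : S.image (· + ((k + 1 : ℕ) : ℤ)) = (S.image (· + (k : ℤ))).image (· + (1 : ℤ)) := by
      rw [Finset.image_image]
      apply Finset.image_congr
      intro x _
      simp only [Function.comp_apply]
      push_cast
      ring
    rw [himg, zval, meas_shift_one htrans, ← zval, ih]

/-- elementary limit lemma -/
lemma le_of_forall_pow_mul_le {a b C D : ℝ} (ha : 0 ≤ a) (hb : 0 < b) (hC : 0 < C)
    (h : ∀ K : ℕ, C * a ^ K ≤ D * b ^ K) : a ≤ b := by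
  by_contra hab
  push_neg at hab
  have h1 : (1 : ℝ) < a / b := (one_lt_div hb).mpr hab
  obtain ⟨K, hK⟩ := pow_unbounded_of_one_lt (D / C) h1
  have h2 : (a / b) ^ K ≤ D / C := by
    rw [div_pow, div_le_div_iff₀ (pow_pos hb K) hC]
    nlinarith [h K]
  linarith

end RunBound

namespace RunBound
variable {μ : Measure (ℤ → Bool)} [IsProbabilityMeasure μ]

lemma zeroOn_finset_empty : ZeroOn ((∅ : Finset ℤ) : Set ℤ) = Set.univ := by
  ext η; simp [ZeroOn]

lemma supermult (hdfkg : DownwardFKG μ) (A B : Finset ℤ) :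
    zval μ A * zval μ B ≤ zval μ (A ∪ B) := by
  have h := quad (μ := μ) hdfkg ∅ A B (by rw [zeroOn_finset_empty]; simp)
  simpa [Finset.empty_union, zval_empty] using h

lemma stepB (htrans : μ.map (fun η x => η (x + 1)) = μ) (hdfkg : DownwardFKG μ)
    (r : ℝ) (hr0 : 0 < r)
    (hI : ∀ k : ℕ, 1 ≤ k → zval μ (Finset.Icc 1 (k : ℤ)) ≤ r ^ k)
    (hposI : ∀ m : ℕ, 0 < zval μ (Finset.Icc 1 (m : ℤ)))
    (Λ : Finset ℤ) (hΛ : ∀ x ∈ Λ, x ≤ 0) (hzΛ : 0 < zval μ Λ) (n : ℕ) :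
    zval μ (Λ ∪ Finset.Icc 1 (n : ℤ)) ≤ r ^ n * zval μ Λ := by
  set m := Λ.sup (fun x => x.natAbs) with hmdef
  have hm : ∀ x ∈ Λ, -(m : ℤ) ≤ x := by
    intro x hx
    have h' : x.natAbs ≤ m := Finset.le_sup (f := fun x : ℤ => x.natAbs) hx
    omega
  set zn := zval μ (Λ ∪ Finset.Icc 1 (n : ℤ)) with hzn
  set zΛ := zval μ Λ with hzΛdef
  -- the key one-step inequality
  have star : ∀ j : ℕ, m + 1 ≤ j →
      zval μ (Λ ∪ Finset.Icc 1 (j : ℤ)) * zn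
        ≤ zval μ (Λ ∪ Finset.Icc 1 ((j : ℤ) + n)) * zΛ := by
    intro j hj
    set T := Λ.image (· + (j : ℤ)) with hTdef
    have hTsub : T ⊆ Finset.Icc 1 (j : ℤ) := by
      intro y hy
      simp only [hTdef, Finset.mem_image] at hy
      obtain ⟨x, hx, rfl⟩ := hy
      have h1 := hm x hx
      have h2 := hΛ x hx
      simp only [Finset.mem_Icc]
      omega
    have hzTΛ : zval μ T = zΛ := zval_shift htrans Λ j
    have hzT : μ (ZeroOn (T : Set ℤ)) ≠ 0 := zval_pos_iff.mp (by rw [hzTΛ]; exact hzΛ)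
    have key := quad hdfkg T (Λ ∪ Finset.Icc 1 (j : ℤ))
      ((Λ ∪ Finset.Icc 1 (n : ℤ)).image (· + (j : ℤ))) hzT
    have hTA : T ∪ (Λ ∪ Finset.Icc 1 (j : ℤ)) = Λ ∪ Finset.Icc 1 (j : ℤ) :=
      Finset.union_eq_right.mpr (hTsub.trans Finset.subset_union_right)
    have hTB : T ∪ (Λ ∪ Finset.Icc 1 (n : ℤ)).image (· + (j : ℤ))
        = (Λ ∪ Finset.Icc 1 (n : ℤ)).image (· + (j : ℤ)) :=
      Finset.union_eq_right.mpr (Finset.image_subset_image Finset.subset_union_left)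
    have hBimg : (Λ ∪ Finset.Icc 1 (n : ℤ)).image (· + (j : ℤ))
        = T ∪ Finset.Icc (1 + (j : ℤ)) ((n : ℤ) + j) := by
      rw [Finset.image_union, Finset.image_add_right_Icc]
    have hAB : (Λ ∪ Finset.Icc 1 (j : ℤ)) ∪ (Λ ∪ Finset.Icc 1 (n : ℤ)).image (· + (j : ℤ))
        = Λ ∪ Finset.Icc 1 ((j : ℤ) + n) := by
      rw [hBimg]
      ext x
      simp only [Finset.mem_union, Finset.mem_Icc]
      constructor
      · rintro ((hx | hx) | (hx | hx))
        · exact Or.inl hx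
        · right; omega
        · have := Finset.mem_Icc.mp (hTsub hx); right; omega
        · right; omega
      · rintro (hx | hx)
        · exact Or.inl (Or.inl hx)
        · by_cases hxj : x ≤ (j : ℤ)
          · left; right; omega
          · right; right; omega
    have hz1 : zval μ ((Λ ∪ Finset.Icc 1 (n : ℤ)).image (· + (j : ℤ)))
        = zn := zval_shift htrans _ j
    rw [hTA, hTB, hAB, hz1, hzTΛ] at key
    exact key
  set C := zval μ (Λ ∪ Finset.Icc 1 ((m + 1 : ℕ) : ℤ)) with hCdef
  have hCpos : 0 < C :=
    lt_of_lt_of_le (mul_pos hzΛ (hposI (m + 1))) (supermult hdfkg _ _)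
  have iter : ∀ K : ℕ,
      C * zn ^ K ≤ zval μ (Λ ∪ Finset.Icc 1 ((m + 1 + K * n : ℕ) : ℤ)) * zΛ ^ K := by
    intro K
    induction K with
    | zero =>
      have hc0 : ((m + 1 + 0 * n : ℕ) : ℤ) = ((m + 1 : ℕ) : ℤ) := by norm_num
      simp only [pow_zero, mul_one, hc0, hCdef, le_refl]
    | succ K ih =>
      have hj : m + 1 ≤ m + 1 + K * n := by omega
      have hstar := star (m + 1 + K * n) hj
      have hcast : ((m + 1 + (K + 1) * n : ℕ) : ℤ) = ((m + 1 + K * n : ℕ) : ℤ) + n := by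
        push_cast; ring
      calc C * zn ^ (K + 1) = (C * zn ^ K) * zn := by ring
        _ ≤ (zval μ (Λ ∪ Finset.Icc 1 ((m + 1 + K * n : ℕ) : ℤ)) * zΛ ^ K) * zn :=
            mul_le_mul_of_nonneg_right ih (zval_nonneg _)
        _ = (zval μ (Λ ∪ Finset.Icc 1 ((m + 1 + K * n : ℕ) : ℤ)) * zn) * zΛ ^ K := by ring
        _ ≤ (zval μ (Λ ∪ Finset.Icc 1 (((m + 1 + K * n : ℕ) : ℤ) + n)) * zΛ) * zΛ ^ K :=
            mul_le_mul_of_nonneg_right hstar (pow_nonneg (zval_nonneg _) K)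
        _ = zval μ (Λ ∪ Finset.Icc 1 (((m + 1 + (K + 1) * n : ℕ)) : ℤ)) * zΛ ^ (K + 1) := by
            rw [hcast]; ring
  have final : ∀ K : ℕ, C * zn ^ K ≤ r ^ (m + 1) * (r ^ n * zΛ) ^ K := by
    intro K
    refine (iter K).trans ?_
    have h1 : zval μ (Λ ∪ Finset.Icc 1 ((m + 1 + K * n : ℕ) : ℤ))
        ≤ r ^ (m + 1 + K * n) :=
      (zval_anti Finset.subset_union_right).trans (hI _ (by omega))
    have h2 : zval μ (Λ ∪ Finset.Icc 1 ((m + 1 + K * n : ℕ) : ℤ)) * zΛ ^ K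
        ≤ r ^ (m + 1 + K * n) * zΛ ^ K :=
      mul_le_mul_of_nonneg_right h1 (pow_nonneg (zval_nonneg _) K)
    refine h2.trans (le_of_eq ?_)
    rw [pow_add, pow_mul, mul_pow]
    ring
  have hb : 0 < r ^ n * zΛ := mul_pos (pow_pos hr0 n) hzΛ
  exact le_of_forall_pow_mul_le (zval_nonneg _) hb hCpos final

end RunBound

namespace RunBound
variable {μ : Measure (ℤ → Bool)} [IsProbabilityMeasure μ]

lemma measurableSet_onesOn (S : Set ℤ) :
    MeasurableSet {η : ℤ → Bool | ∀ x ∈ S, η x = true} := by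
  have h : {η : ℤ → Bool | ∀ x ∈ S, η x = true}
      = ⋂ x ∈ S, (fun η : ℤ → Bool => η x) ⁻¹' {true} := by
    ext η; simp
  rw [h]
  exact MeasurableSet.biInter S.to_countable
    (fun x _ => (measurable_pi_apply x) (measurableSet_singleton true))

lemma increasing_onesOn (S : Set ℤ) :
    IncreasingEvent {η : ℤ → Bool | ∀ x ∈ S, η x = true} := by
  refine ⟨measurableSet_onesOn S, ?_⟩
  intro ξ η hle hξ x hx
  have h := hle x
  rw [hξ x hx] at h
  exact le_antisymm (Bool.le_true _) h

end RunBound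


open RunBound in
/-- The exponential bound on runs of zeros persists under conditioning on any
finite cylinder event in the past coordinates `{…,−1,0}`. -/
theorem run_bound_given_past (μ : Measure (ℤ → Bool)) [IsProbabilityMeasure μ]
    (htrans : μ.map (fun η x => η (x + 1)) = μ)
    (hdfkg : DownwardFKG μ) (ρ : NNReal) (hρ₀ : 0 < ρ) (hρ₁ : ρ < 1)
    (hrun : ∀ n : ℕ, 1 ≤ n →
      μ (ZeroOn {x : ℤ | 1 ≤ x ∧ x ≤ (n : ℤ)}) ≤ ((1 - ρ : NNReal) : ENNReal) ^ n) :
    ∀ Λ Δ : Finset ℤ, (↑Λ ⊆ {x : ℤ | x ≤ 0}) → (↑Δ ⊆ {x : ℤ | x ≤ 0}) →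
      Disjoint Λ Δ →
      0 < μ {η | (∀ x ∈ Λ, η x = false) ∧ (∀ x ∈ Δ, η x = true)} →
      ∀ n : ℕ, 1 ≤ n →
        μ[|{η | (∀ x ∈ Λ, η x = false) ∧ (∀ x ∈ Δ, η x = true)}]
            (ZeroOn {x : ℤ | 1 ≤ x ∧ x ≤ (n : ℤ)}) ≤
          ((1 - ρ : NNReal) : ENNReal) ^ n := by
  intro Λ Δ hΛ hΔ hdisj hpos n hn
  set Ones : Set (ℤ → Bool) := {η | ∀ x ∈ (Δ : Set ℤ), η x = true} with hOnes
  set Aset : Set (ℤ → Bool) := {η | (∀ x ∈ Λ, η x = false) ∧ (∀ x ∈ Δ, η x = true)} with hAset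
  have hAeq : Aset = ZeroOn (Λ : Set ℤ) ∩ Ones := by
    ext η
    simp [hAset, hOnes, ZeroOn]
  have hAmeas : MeasurableSet Aset := by
    rw [hAeq]; exact (measurableSet_zeroOn _).inter (measurableSet_onesOn _)
  have hμA : μ Aset ≠ 0 := hpos.ne'
  have hIset : ZeroOn {x : ℤ | 1 ≤ x ∧ x ≤ (n : ℤ)}
      = ZeroOn ((Finset.Icc 1 (n : ℤ) : Finset ℤ) : Set ℤ) := by
    have hbase : {x : ℤ | 1 ≤ x ∧ x ≤ (n : ℤ)} = ((Finset.Icc 1 (n : ℤ) : Finset ℤ) : Set ℤ) := by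
      ext x; simp
    rw [hbase]
  rw [hIset, cond_apply hAmeas μ]
  set ZI : Set (ℤ → Bool) := ZeroOn ((Finset.Icc 1 (n : ℤ) : Finset ℤ) : Set ℤ) with hZI
  by_cases hz1 : μ (ZeroOn (({1} : Finset ℤ) : Set ℤ)) = 0
  · -- degenerate case: no zeros at all
    have hsub : ZI ⊆ ZeroOn (({1} : Finset ℤ) : Set ℤ) := by
      apply zeroOn_anti
      intro x hx
      simp only [Finset.mem_singleton] at hx
      subst hx
      simp only [Finset.mem_Icc]
      exact ⟨le_refl 1, by exact_mod_cast hn⟩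
    have h0 : μ (Aset ∩ ZI) = 0 :=
      measure_mono_null (Set.inter_subset_right.trans hsub) hz1
    rw [h0, mul_zero]
    exact zero_le
  · -- main case
    have hz1' : 0 < zval μ ({1} : Finset ℤ) := zval_pos_iff.mpr hz1
    set r : ℝ := 1 - (ρ : ℝ) with hr
    have hρR : (ρ : ℝ) < 1 := by exact_mod_cast hρ₁
    have hr0 : 0 < r := by rw [hr]; linarith
    have hcoe : ((1 - ρ : NNReal) : ℝ) = r := by
      rw [NNReal.coe_sub hρ₁.le, NNReal.coe_one]
    have hI : ∀ k : ℕ, 1 ≤ k → zval μ (Finset.Icc 1 (k : ℤ)) ≤ r ^ k := by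
      intro k hk
      have h := hrun k hk
      have hset : ((Finset.Icc 1 (k : ℤ) : Finset ℤ) : Set ℤ) = {x : ℤ | 1 ≤ x ∧ x ≤ (k : ℤ)} := by
        ext x; simp
      have h' := ENNReal.toReal_mono (ENNReal.pow_ne_top ENNReal.coe_ne_top) h
      rw [ENNReal.toReal_pow, ENNReal.coe_toReal, hcoe] at h'
      rw [zval, hset]
      exact h'
    have hposI : ∀ m : ℕ, 0 < zval μ (Finset.Icc 1 (m : ℤ)) := by
      intro m
      induction m with
      | zero =>
        have : Finset.Icc (1 : ℤ) ((0 : ℕ) : ℤ) = ∅ := Finset.Icc_eq_empty (by norm_num)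
        rw [this, zval_empty]
        exact one_pos
      | succ k ih =>
        have hsh : zval μ (({1} : Finset ℤ).image (· + (k : ℤ))) = zval μ ({1} : Finset ℤ) :=
          zval_shift htrans _ k
        have himg : ({1} : Finset ℤ).image (· + (k : ℤ)) = {(1 + (k : ℤ))} := by simp
        have hzpt : 0 < zval μ ({(1 + (k : ℤ))} : Finset ℤ) := by
          rw [← himg, hsh]; exact hz1'
        have hsup := supermult hdfkg (Finset.Icc 1 (k : ℤ)) {(1 + (k : ℤ))}
        have hun : Finset.Icc 1 (k : ℤ) ∪ {(1 + (k : ℤ))} = Finset.Icc 1 ((k + 1 : ℕ) : ℤ) := by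
          ext x
          simp only [Finset.mem_union, Finset.mem_Icc, Finset.mem_singleton]
          push_cast
          omega
        rw [hun] at hsup
        exact lt_of_lt_of_le (mul_pos ih hzpt) hsup
    have hsubΛ : Aset ⊆ ZeroOn (Λ : Set ℤ) := by rw [hAeq]; exact Set.inter_subset_left
    have hzΛ : 0 < zval μ Λ := zval_pos_iff.mpr (fun h0 => hμA (measure_mono_null hsubΛ h0))
    have hzΛ0 : μ (ZeroOn (Λ : Set ℤ)) ≠ 0 := zval_pos_iff.mp hzΛ
    have hB := stepB htrans hdfkg r hr0 hI hposI Λ (fun x hx => hΛ hx) hzΛ n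
    -- Step A: chip away the ones on Δ using positive association
    set ν := μ[|ZeroOn (Λ : Set ℤ)] with hν
    haveI : IsProbabilityMeasure ν := cond_isProbabilityMeasure hzΛ0
    have hPA := hdfkg Λ (pos_iff_ne_zero.mpr hzΛ0)
    have hpa := hPA Ones ZIᶜ (increasing_onesOn _) (increasing_compl_zeroOn _)
    rw [← hν] at hpa
    set f := (ν Ones).toReal with hf
    set g := (ν ZI).toReal with hg
    set e := (ν (Ones ∩ ZI)).toReal with he
    set d := (ν (Ones \ ZI)).toReal with hd
    have hZImeas : MeasurableSet ZI := measurableSet_zeroOn _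
    have hed : e + d = f := by
      have := measure_inter_add_diff (μ := ν) Ones hZImeas
      have h' := congrArg ENNReal.toReal this
      rwa [ENNReal.toReal_add (measure_ne_top _ _) (measure_ne_top _ _)] at h'
    have hstepA : e ≤ f * g := by
      have hc : ν ZIᶜ = 1 - ν ZI := prob_compl_eq_one_sub hZImeas
      have hdiff : Ones ∩ ZIᶜ = Ones \ ZI := (Set.diff_eq _ _).symm
      rw [hc, hdiff] at hpa
      have hg1 : ν ZI ≤ 1 := prob_le_one
      have h' := ENNReal.toReal_mono (measure_ne_top _ _) hpa
      rw [ENNReal.toReal_mul, ENNReal.toReal_sub_of_le hg1 ENNReal.one_ne_top,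
        ENNReal.toReal_one, ← hf, ← hg, ← hd] at h'
      -- h' : f * (1 - g) ≤ d
      nlinarith [h', hed]
    -- identify the conditional values
    have cond_toReal : ∀ X : Set (ℤ → Bool),
        (ν X).toReal = (μ (ZeroOn (Λ : Set ℤ) ∩ X)).toReal / zval μ Λ := by
      intro X
      rw [hν, cond_apply (measurableSet_zeroOn _) μ, ENNReal.toReal_mul, ENNReal.toReal_inv,
        inv_mul_eq_div]
      rfl
    have hfid : f = (μ Aset).toReal / zval μ Λ := by
      rw [hf, cond_toReal, hAeq]
    have hgid : g = zval μ (Λ ∪ Finset.Icc 1 (n : ℤ)) / zval μ Λ := by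
      rw [hg, hν, hZI, cond_zeroOn_toReal]
    have heid : e = (μ (Aset ∩ ZI)).toReal / zval μ Λ := by
      rw [he, cond_toReal, hAeq, Set.inter_assoc]
    have hgle : g ≤ r ^ n := by
      rw [hgid]
      exact (div_le_iff₀ hzΛ).mpr hB
    have hXY : (μ (Aset ∩ ZI)).toReal ≤ (μ Aset).toReal * r ^ n := by
      have h1 : e ≤ f * r ^ n :=
        hstepA.trans (mul_le_mul_of_nonneg_left hgle (by rw [hf]; exact ENNReal.toReal_nonneg))
      rw [heid, hfid, div_mul_eq_mul_div] at h1
      have h2 := (div_le_div_iff₀ hzΛ hzΛ).mp h1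
      exact le_of_mul_le_mul_right (by linarith) hzΛ
    have hfinL : (μ Aset)⁻¹ * μ (Aset ∩ ZI) ≠ ⊤ :=
      ENNReal.mul_ne_top (ENNReal.inv_ne_top.mpr hμA) (measure_ne_top _ _)
    have hfinR : (((1 - ρ : NNReal) : ENNReal)) ^ n ≠ ⊤ :=
      ENNReal.pow_ne_top ENNReal.coe_ne_top
    rw [← ENNReal.toReal_le_toReal hfinL hfinR, ENNReal.toReal_mul, ENNReal.toReal_inv,
      inv_mul_eq_div, ENNReal.toReal_pow, ENNReal.coe_toReal, hcoe,
      div_le_iff₀ (ENNReal.toReal_pos hμA (measure_ne_top _ _))]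
    linarith [hXY]
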